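/- Let x' = A(t)x be uniformly asymptotically stable with ‖Φ(t,s)‖ ≤ K e^{-α(t-s)} for t ≥ s ≥ 0 and sup ‖A(t)‖ = M. Given a continuous symmetric matrix function Q(t) with q⁻ I ≤ Q(t) ≤ q⁺ I for constants 0 < q⁻ ≤ q⁺, define P(t) = ∫_t^∞ Φ(τ,t)ᵀ Q(τ) Φ(τ,t) dτ. Then P(t) is well defined, symmetric, satisfies (q⁻/2M) I ≤ P(t) ≤ (K²q⁺/2α) I for all t ≥ 0, and −Ṗ(t) = A(t)ᵀP(t) + P(t)A(t) + Q(t). -/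

import Mathlib

open Real MeasureTheory Filter Topology

noncomputable def evEquiv (n : ℕ) :
    ((EuclideanSpace ℝ (Fin n)) →L[ℝ] (EuclideanSpace ℝ (Fin n))) ≃L[ℝ]
      (Fin n → EuclideanSpace ℝ (Fin n)) :=
  (LinearMap.toContinuousLinearMap.symm.trans
    ((EuclideanSpace.basisFun (Fin n) ℝ).toBasis.constr ℝ).symm).toContinuousLinearEquiv

lemma evEquiv_apply (n : ℕ) (T : (EuclideanSpace ℝ (Fin n)) →L[ℝ] (EuclideanSpace ℝ (Fin n)))
    (i : Fin n) : evEquiv n T i = T ((EuclideanSpace.basisFun (Fin n) ℝ).toBasis i) := rfl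

lemma clm_hasDerivAt_of_apply {n : ℕ}
    {f : ℝ → (EuclideanSpace ℝ (Fin n)) →L[ℝ] (EuclideanSpace ℝ (Fin n))}
    {f' : (EuclideanSpace ℝ (Fin n)) →L[ℝ] (EuclideanSpace ℝ (Fin n))} {t : ℝ}
    (h : ∀ ξ, HasDerivAt (fun τ => f τ ξ) (f' ξ) t) : HasDerivAt f f' t := by
  set e := evEquiv n
  have h1 : HasDerivAt (fun τ => e (f τ)) (e f') t := by
    rw [hasDerivAt_pi]
    intro i
    exact h _
  have h2 : HasDerivAt (fun τ => e.symm (e (f τ))) (e.symm.toContinuousLinearMap (e f')) t :=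
    e.symm.toContinuousLinearMap.hasFDerivAt.comp_hasDerivAt t h1
  simpa using h2

lemma norm_le_of_forms {E : Type*} [NormedAddCommGroup E] [InnerProductSpace ℝ E]
    (T : E →L[ℝ] E) (c : ℝ) (hc : 0 ≤ c)
    (hsym : ∀ x z : E, (inner ℝ (T x) z : ℝ) = inner ℝ x (T z))
    (h0 : ∀ x : E, 0 ≤ (inner ℝ x (T x) : ℝ))
    (hup : ∀ x : E, (inner ℝ x (T x) : ℝ) ≤ c * ‖x‖ ^ 2) : ‖T‖ ≤ c := by
  have hCS : ∀ u v : E, (inner ℝ u (T v) : ℝ) ^ 2 ≤ (inner ℝ u (T u) : ℝ) * (inner ℝ v (T v) : ℝ) := by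
    intro u v
    have h := discrim_le_zero (a := (inner ℝ v (T v) : ℝ)) (b := 2 * (inner ℝ u (T v) : ℝ))
      (c := (inner ℝ u (T u) : ℝ)) ?_
    · rw [discrim] at h; nlinarith [h]
    · intro lam
      have h2 := h0 (u + lam • v)
      have e1 : (inner ℝ (u + lam • v) (T (u + lam • v)) : ℝ)
          = (inner ℝ u (T u) : ℝ) + 2 * ((inner ℝ u (T v) : ℝ)) * lam
            + (inner ℝ v (T v) : ℝ) * (lam * lam) := by
        have hvu : (inner ℝ v (T u) : ℝ) = (inner ℝ u (T v) : ℝ) := by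
          rw [real_inner_comm, hsym]
        simp only [map_add, _root_.map_smul, inner_add_left, inner_add_right,
          real_inner_smul_left, real_inner_smul_right, hvu]
        ring
      rw [e1] at h2
      linarith [h2]
  apply T.opNorm_le_bound hc
  intro x
  have key := hCS (T x) x
  have e2 : (inner ℝ (T x) (T x) : ℝ) = ‖T x‖ ^ 2 := real_inner_self_eq_norm_sq _
  have h5 : (inner ℝ (T x) (T (T x)) : ℝ) ≤ c * ‖T x‖ ^ 2 := hup _
  have h6 : (inner ℝ x (T x) : ℝ) ≤ c * ‖x‖ ^ 2 := hup _
  have h7 : 0 ≤ (inner ℝ x (T x) : ℝ) := h0 _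
  have h8 : 0 ≤ (inner ℝ (T x) (T (T x)) : ℝ) := h0 _
  have h9 : (‖T x‖ ^ 2) ^ 2 ≤ (c * ‖T x‖ ^ 2) * (c * ‖x‖ ^ 2) := by
    calc (‖T x‖ ^ 2) ^ 2 = (inner ℝ (T x) (T x) : ℝ) ^ 2 := by rw [e2]
    _ ≤ (inner ℝ (T x) (T (T x)) : ℝ) * (inner ℝ x (T x) : ℝ) := key
    _ ≤ (c * ‖T x‖ ^ 2) * (c * ‖x‖ ^ 2) := by
        apply mul_le_mul h5 h6 h7 (by positivity)
  rcases le_or_gt ‖T x‖ (c * ‖x‖) with h | h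
  · exact h
  · have hp : 0 < ‖T x‖ := (mul_nonneg hc (norm_nonneg x)).trans_lt h
    have h9' : ‖T x‖ ^ 2 * ‖T x‖ ^ 2 ≤ (c * ‖x‖) ^ 2 * ‖T x‖ ^ 2 := by nlinarith [h9]
    have h10 : ‖T x‖ ^ 2 ≤ (c * ‖x‖) ^ 2 := le_of_mul_le_mul_right h9' (pow_pos hp 2)
    nlinarith [h10, hp, mul_nonneg hc (norm_nonneg x)]

lemma integrableOn_exp_shift (t b : ℝ) (hb : 0 < b) :
    MeasureTheory.IntegrableOn (fun τ => Real.exp (-b * (τ - t))) (Set.Ioi t) := by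
  have h := (exp_neg_integrableOn_Ioi t hb).const_mul (Real.exp (b * t))
  have heq : (fun τ => Real.exp (b * t) * Real.exp (-b * τ))
      = fun τ => Real.exp (-b * (τ - t)) := by
    funext τ; rw [← Real.exp_add]; ring_nf
  rwa [heq] at h

lemma integral_exp_shift (t b : ℝ) (hb : 0 < b) :
    ∫ τ in Set.Ioi t, Real.exp (-b * (τ - t)) = 1 / b := by
  have hderiv : ∀ x ∈ Set.Ici t,
      HasDerivAt (fun τ => -(1/b) * Real.exp (-b * (τ - t))) (Real.exp (-b * (x - t))) x := by
    intro x _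
    have h1 : HasDerivAt (fun τ : ℝ => -b * (τ - t)) (-b) x := by
      simpa using ((hasDerivAt_id x).sub_const t).const_mul (-b)
    have h2 := (Real.hasDerivAt_exp (-b * (x - t))).comp x h1
    have h3 := h2.const_mul (-(1/b))
    convert h3 using 1
    rfl
    rfl
    rfl
    linear_combination (-Real.exp (-b * (x - t))) * one_div_mul_cancel hb.ne'
  have htend : Filter.Tendsto (fun τ => -(1/b) * Real.exp (-b * (τ - t)))
      Filter.atTop (nhds 0) := by
    rw [show (0:ℝ) = -(1/b) * 0 by ring]
    apply Filter.Tendsto.const_mul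
    apply Real.tendsto_exp_atBot.comp
    have h4 : Filter.Tendsto (fun τ : ℝ => τ - t) Filter.atTop Filter.atTop :=
      Filter.tendsto_atTop_add_const_right _ (-t) Filter.tendsto_id
    have h5 : Filter.Tendsto (fun y : ℝ => -b * y) Filter.atTop Filter.atBot := by
      apply Filter.Tendsto.const_mul_atTop_of_neg (by linarith : -b < 0) Filter.tendsto_id
    exact h5.comp h4
  have key := MeasureTheory.integral_Ioi_of_hasDerivAt_of_tendsto' hderiv
    (integrableOn_exp_shift t b hb) htend
  rw [key]
  simp

set_option maxHeartbeats 1000000 in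
theorem stmt15 (n : ℕ) (K α M qm qp : ℝ)
    (hK : 1 ≤ K) (hα : 0 < α) (hM : 0 < M) (hqm : 0 < qm) (hqq : qm ≤ qp)
    (A : ℝ → (EuclideanSpace ℝ (Fin n)) →L[ℝ] (EuclideanSpace ℝ (Fin n)))
    (hAcont : Continuous A) (hAbdd : ∀ t, 0 ≤ t → ‖A t‖ ≤ M)
    (Φ : ℝ → ℝ → ((EuclideanSpace ℝ (Fin n)) →L[ℝ] (EuclideanSpace ℝ (Fin n))))
    (hΦid : ∀ s, Φ s s = ContinuousLinearMap.id ℝ (EuclideanSpace ℝ (Fin n)))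
    (hΦderiv : ∀ s ξ t, HasDerivAt (fun r => Φ r s ξ) (A t (Φ t s ξ)) t)
    (hΦderiv2 : ∀ τ ξ s, HasDerivAt (fun r => Φ τ r ξ) (-(Φ τ s ((A s) ξ))) s)
    (hΦcocycle : ∀ t s r, (Φ t s).comp (Φ s r) = Φ t r)
    (hΦdecay : ∀ s t, 0 ≤ s → s ≤ t → ‖Φ t s‖ ≤ K * Real.exp (-α * (t - s)))
    (Q : ℝ → (EuclideanSpace ℝ (Fin n)) →L[ℝ] (EuclideanSpace ℝ (Fin n)))
    (hQcont : Continuous Q)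
    (hQsym : ∀ t (x z : (EuclideanSpace ℝ (Fin n))), (inner ℝ (Q t x) z : ℝ) = inner ℝ x (Q t z))
    (hQbounds : ∀ t (x : (EuclideanSpace ℝ (Fin n))),
      qm * ‖x‖ ^ 2 ≤ (inner ℝ x (Q t x) : ℝ) ∧ (inner ℝ x (Q t x) : ℝ) ≤ qp * ‖x‖ ^ 2) :
    let P : ℝ → ((EuclideanSpace ℝ (Fin n)) →L[ℝ] (EuclideanSpace ℝ (Fin n))) := fun t =>
      ∫ τ in Set.Ioi t, (ContinuousLinearMap.adjoint (Φ τ t)).comp ((Q τ).comp (Φ τ t))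
    (∀ t, 0 ≤ t → MeasureTheory.IntegrableOn
        (fun τ => (ContinuousLinearMap.adjoint (Φ τ t)).comp ((Q τ).comp (Φ τ t)))
        (Set.Ioi t)) ∧
    (∀ t, 0 ≤ t → ∀ x z : (EuclideanSpace ℝ (Fin n)), (inner ℝ (P t x) z : ℝ) = inner ℝ x (P t z)) ∧
    (∀ t, 0 ≤ t → ∀ x : (EuclideanSpace ℝ (Fin n)),
      (qm / (2 * M)) * ‖x‖ ^ 2 ≤ (inner ℝ x (P t x) : ℝ) ∧
      (inner ℝ x (P t x) : ℝ) ≤ (K ^ 2 * qp / (2 * α)) * ‖x‖ ^ 2) ∧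
    (∀ t, 0 ≤ t → HasDerivAt P
      (-((ContinuousLinearMap.adjoint (A t)).comp (P t) + (P t).comp (A t) + Q t)) t) := by
  intro P
  have hqp : 0 < qp := lt_of_lt_of_le hqm hqq
  have hK0 : 0 < K := lt_of_lt_of_le one_pos hK
  -- norm bound on Q
  have hQpos : ∀ τ (x : EuclideanSpace ℝ (Fin n)), 0 ≤ (inner ℝ x (Q τ x) : ℝ) := fun τ x =>
    le_trans (by positivity) ((hQbounds τ x).1)
  have hQnorm : ∀ τ, ‖Q τ‖ ≤ qp := fun τ =>
    norm_le_of_forms (Q τ) qp hqp.le (hQsym τ) (hQpos τ) (fun x => (hQbounds τ x).2)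
  -- operator-valued derivatives of Φ
  have hD1 : ∀ s t, HasDerivAt (fun τ => Φ τ s) ((A t).comp (Φ t s)) t := by
    intro s t
    exact clm_hasDerivAt_of_apply fun ξ => hΦderiv s ξ t
  have hD2 : ∀ τ s, HasDerivAt (fun r => Φ τ r) (-((Φ τ s).comp (A s))) s := by
    intro τ s
    exact clm_hasDerivAt_of_apply fun ξ => by simpa using hΦderiv2 τ ξ s
  have hΦc1 : ∀ s, Continuous (fun τ => Φ τ s) := fun s =>
    continuous_iff_continuousAt.2 fun t => (hD1 s t).continuousAt
  -- adjoint as a continuous linear map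
  let adj : ((EuclideanSpace ℝ (Fin n)) →L[ℝ] (EuclideanSpace ℝ (Fin n))) →L[ℝ]
      ((EuclideanSpace ℝ (Fin n)) →L[ℝ] (EuclideanSpace ℝ (Fin n))) :=
    LinearMap.toContinuousLinearMap
      { toFun := fun T => ContinuousLinearMap.adjoint T
        map_add' := fun T S => by simp [map_add]
        map_smul' := fun c T => by
          simp [LinearIsometryEquiv.map_smulₛₗ, starRingEnd_apply] }
  have adj_apply : ∀ T, adj T = ContinuousLinearMap.adjoint T := fun T => rfl
  have hadjD : ∀ {f : ℝ → (EuclideanSpace ℝ (Fin n)) →L[ℝ] (EuclideanSpace ℝ (Fin n))}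
      {f' : (EuclideanSpace ℝ (Fin n)) →L[ℝ] (EuclideanSpace ℝ (Fin n))} {t : ℝ},
      HasDerivAt f f' t →
        HasDerivAt (fun r => ContinuousLinearMap.adjoint (f r)) (ContinuousLinearMap.adjoint f') t := by
    intro f f' t hf
    have := adj.hasFDerivAt.comp_hasDerivAt t hf
    exact this
  have hadjnorm : ∀ T : (EuclideanSpace ℝ (Fin n)) →L[ℝ] (EuclideanSpace ℝ (Fin n)),
      ‖ContinuousLinearMap.adjoint T‖ = ‖T‖ := fun T => LinearIsometryEquiv.norm_map _ T
  -- the base integrand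
  set G : ℝ → (EuclideanSpace ℝ (Fin n)) →L[ℝ] (EuclideanSpace ℝ (Fin n)) :=
    fun τ => (ContinuousLinearMap.adjoint (Φ τ 0)).comp ((Q τ).comp (Φ τ 0)) with hGdef
  have hGcont : Continuous G := by
    apply Continuous.clm_comp
    · exact adj.continuous.comp (hΦc1 0)
    · exact hQcont.clm_comp (hΦc1 0)
  have hGbound : ∀ τ, 0 ≤ τ → ‖G τ‖ ≤ (K * K * qp) * Real.exp (-(2*α) * τ) := by
    intro τ hτ
    have hd := hΦdecay 0 τ le_rfl hτ
    have h1 : ‖G τ‖ ≤ ‖Φ τ 0‖ * (‖Q τ‖ * ‖Φ τ 0‖) := by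
      calc ‖G τ‖ ≤ ‖ContinuousLinearMap.adjoint (Φ τ 0)‖ * ‖(Q τ).comp (Φ τ 0)‖ :=
            ContinuousLinearMap.opNorm_comp_le _ _
      _ ≤ ‖Φ τ 0‖ * (‖Q τ‖ * ‖Φ τ 0‖) := by
          rw [hadjnorm]
          exact mul_le_mul_of_nonneg_left (ContinuousLinearMap.opNorm_comp_le _ _)
            (norm_nonneg _)
    have hexp : Real.exp (-α * (τ - 0)) * Real.exp (-α * (τ - 0)) = Real.exp (-(2*α) * τ) := by
      rw [← Real.exp_add]; ring_nf
    calc ‖G τ‖ ≤ ‖Φ τ 0‖ * (‖Q τ‖ * ‖Φ τ 0‖) := h1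
    _ ≤ (K * Real.exp (-α * (τ - 0))) * (qp * (K * Real.exp (-α * (τ - 0)))) := by
        apply mul_le_mul hd _ (mul_nonneg (norm_nonneg _) (norm_nonneg _))
          (by positivity)
        exact mul_le_mul (hQnorm τ) hd (norm_nonneg _) hqp.le
    _ = (K * K * qp) * (Real.exp (-α * (τ - 0)) * Real.exp (-α * (τ - 0))) := by ring
    _ = (K * K * qp) * Real.exp (-(2*α) * τ) := by rw [hexp]
  have hGint : ∀ u : ℝ, MeasureTheory.IntegrableOn G (Set.Ioi u) := by
    intro u
    have h1 : MeasureTheory.IntegrableOn G (Set.Ioi (0:ℝ)) := by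
      apply MeasureTheory.Integrable.mono'
        ((exp_neg_integrableOn_Ioi 0 (by positivity : (0:ℝ) < 2*α)).const_mul (K * K * qp))
      · exact hGcont.aestronglyMeasurable.restrict
      · filter_upwards [MeasureTheory.ae_restrict_mem measurableSet_Ioi] with τ hτ
        exact hGbound τ (le_of_lt hτ)
    have h2 : MeasureTheory.IntegrableOn G (Set.Ioc u 0) := hGcont.integrableOn_Ioc
    apply (h2.union h1).mono_set
    intro x hx
    rcases le_or_gt x 0 with h | h
    · exact Or.inl ⟨hx, h⟩
    · exact Or.inr h
  set R : ℝ → (EuclideanSpace ℝ (Fin n)) →L[ℝ] (EuclideanSpace ℝ (Fin n)) :=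
    fun t => ∫ τ in Set.Ioi t, G τ with hRdef
  have hsplit : ∀ t u : ℝ, t ≤ u → R t = (∫ τ in t..u, G τ) + R u := by
    intro t u h
    rw [intervalIntegral.integral_of_le h, hRdef]
    simp only
    rw [← Set.Ioc_union_Ioi_eq_Ioi h,
      MeasureTheory.setIntegral_union (Set.Ioc_disjoint_Ioi le_rfl) measurableSet_Ioi
        ((hGint t).mono_set Set.Ioc_subset_Ioi_self) (hGint u)]
  have hsplit' : ∀ t u : ℝ, R t = (∫ τ in t..u, G τ) + R u := by
    intro t u
    rcases le_total t u with h | h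
    · exact hsplit t u h
    · have h2 := hsplit u t h
      have h3 : (∫ τ in u..t, G τ) = R u - R t := by rw [h2]; abel
      rw [intervalIntegral.integral_symm, h3]
      abel
  have hRderiv : ∀ t : ℝ, HasDerivAt R (-(G t)) t := by
    intro t
    have h1 : R = fun u => R 0 - ∫ τ in (0:ℝ)..u, G τ := by
      funext u
      have := hsplit' u 0
      rw [intervalIntegral.integral_symm] at this
      rw [this]
      abel
    have h2 : HasDerivAt (fun u => ∫ τ in (0:ℝ)..u, G τ) (G t) t :=
      (hGcont.integral_hasStrictDerivAt 0 t).hasDerivAt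
    have h3 : HasDerivAt (fun u => R 0 - ∫ τ in (0:ℝ)..u, G τ) (0 - G t) t :=
      (hasDerivAt_const t (R 0)).sub h2
    rw [← h1] at h3
    simpa using h3
  have hFeq : ∀ t τ : ℝ, (ContinuousLinearMap.adjoint (Φ τ t)).comp ((Q τ).comp (Φ τ t))
      = (ContinuousLinearMap.adjoint (Φ 0 t)).comp ((G τ).comp (Φ 0 t)) := by
    intro t τ
    rw [hGdef]
    simp only
    rw [← hΦcocycle τ 0 t, ContinuousLinearMap.adjoint_comp]
    simp only [ContinuousLinearMap.comp_assoc]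
  -- the big comp operator
  have hFint : ∀ t : ℝ, MeasureTheory.IntegrableOn
      (fun τ => (ContinuousLinearMap.adjoint (Φ τ t)).comp ((Q τ).comp (Φ τ t)))
      (Set.Ioi t) := by
    intro t
    have heq : (fun τ => (ContinuousLinearMap.adjoint (Φ τ t)).comp ((Q τ).comp (Φ τ t)))
        = fun τ => ((ContinuousLinearMap.compL ℝ (EuclideanSpace ℝ (Fin n))
            (EuclideanSpace ℝ (Fin n)) (EuclideanSpace ℝ (Fin n))
            (ContinuousLinearMap.adjoint (Φ 0 t))).comp
          ((ContinuousLinearMap.compL ℝ (EuclideanSpace ℝ (Fin n))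
            (EuclideanSpace ℝ (Fin n)) (EuclideanSpace ℝ (Fin n))).flip (Φ 0 t))) (G τ) := by
      funext τ
      simp only [ContinuousLinearMap.coe_comp', Function.comp_apply,
        ContinuousLinearMap.flip_apply, ContinuousLinearMap.compL_apply]
      exact hFeq t τ
    rw [heq]
    exact ContinuousLinearMap.integrable_comp _ (hGint t)
  have hPform : P = fun t => (ContinuousLinearMap.adjoint (Φ 0 t)).comp
      ((R t).comp (Φ 0 t)) := by
    funext t
    show (∫ τ in Set.Ioi t,
      (ContinuousLinearMap.adjoint (Φ τ t)).comp ((Q τ).comp (Φ τ t))) = _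
    have h1 : (∫ τ in Set.Ioi t,
        (ContinuousLinearMap.adjoint (Φ τ t)).comp ((Q τ).comp (Φ τ t)))
        = ∫ τ in Set.Ioi t, (ContinuousLinearMap.compL ℝ (EuclideanSpace ℝ (Fin n))
            (EuclideanSpace ℝ (Fin n)) (EuclideanSpace ℝ (Fin n))
            (ContinuousLinearMap.adjoint (Φ 0 t)))
          (((ContinuousLinearMap.compL ℝ (EuclideanSpace ℝ (Fin n))
            (EuclideanSpace ℝ (Fin n)) (EuclideanSpace ℝ (Fin n))).flip (Φ 0 t)) (G τ)) := by
      congr 1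
      funext τ
      simp only [ContinuousLinearMap.flip_apply, ContinuousLinearMap.compL_apply]
      exact hFeq t τ
    rw [h1, ContinuousLinearMap.integral_comp_comm _
        (ContinuousLinearMap.integrable_comp _ (hGint t)),
      ContinuousLinearMap.integral_comp_comm _ (hGint t)]
    simp only [ContinuousLinearMap.flip_apply, ContinuousLinearMap.compL_apply]
    rfl
  have hPapp : ∀ t (x : EuclideanSpace ℝ (Fin n)), P t x = ∫ τ in Set.Ioi t,
      (ContinuousLinearMap.adjoint (Φ τ t)) ((Q τ) ((Φ τ t) x)) := by
    intro t x
    show (∫ τ in Set.Ioi t,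
      (ContinuousLinearMap.adjoint (Φ τ t)).comp ((Q τ).comp (Φ τ t))) x = _
    rw [ContinuousLinearMap.integral_apply (hFint t)]
    simp only [ContinuousLinearMap.coe_comp', Function.comp_apply]
  have hFxint : ∀ t (x : EuclideanSpace ℝ (Fin n)), MeasureTheory.IntegrableOn
      (fun τ => (ContinuousLinearMap.adjoint (Φ τ t)) ((Q τ) ((Φ τ t) x))) (Set.Ioi t) := by
    intro t x
    have h := (ContinuousLinearMap.apply ℝ (EuclideanSpace ℝ (Fin n)) x).integrable_comp
      (hFint t)
    simp [ContinuousLinearMap.apply_apply] at h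
    exact h
  have hptwise : ∀ t τ (x z : EuclideanSpace ℝ (Fin n)),
      (inner ℝ z ((ContinuousLinearMap.adjoint (Φ τ t)) ((Q τ) ((Φ τ t) x))) : ℝ)
        = inner ℝ ((Φ τ t) z) ((Q τ) ((Φ τ t) x)) := fun t τ x z =>
    ContinuousLinearMap.adjoint_inner_right _ _ _
  have hsymm : ∀ t, ∀ x z : EuclideanSpace ℝ (Fin n),
      (inner ℝ (P t x) z : ℝ) = inner ℝ x (P t z) := by
    intro t x z
    have e1 : (inner ℝ (P t x) z : ℝ) = inner ℝ z (P t x) := real_inner_comm _ _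
    rw [e1, hPapp t x, hPapp t z]
    calc (inner ℝ z (∫ τ in Set.Ioi t,
          (ContinuousLinearMap.adjoint (Φ τ t)) ((Q τ) ((Φ τ t) x))) : ℝ)
        = ∫ τ in Set.Ioi t,
          (inner ℝ z ((ContinuousLinearMap.adjoint (Φ τ t)) ((Q τ) ((Φ τ t) x))) : ℝ) :=
          (integral_inner (hFxint t x) z).symm
      _ = ∫ τ in Set.Ioi t,
          (inner ℝ x ((ContinuousLinearMap.adjoint (Φ τ t)) ((Q τ) ((Φ τ t) z))) : ℝ) := by
          apply MeasureTheory.integral_congr_ae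
          apply Filter.Eventually.of_forall
          intro τ
          calc (inner ℝ z ((ContinuousLinearMap.adjoint (Φ τ t)) ((Q τ) ((Φ τ t) x))) : ℝ)
              = inner ℝ ((Φ τ t) z) ((Q τ) ((Φ τ t) x)) := hptwise t τ x z
            _ = inner ℝ ((Q τ) ((Φ τ t) x)) ((Φ τ t) z) := real_inner_comm _ _
            _ = inner ℝ ((Φ τ t) x) ((Q τ) ((Φ τ t) z)) := hQsym τ _ _
            _ = inner ℝ x ((ContinuousLinearMap.adjoint (Φ τ t)) ((Q τ) ((Φ τ t) z))) :=
                (hptwise t τ z x).symm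
      _ = (inner ℝ x (∫ τ in Set.Ioi t,
          (ContinuousLinearMap.adjoint (Φ τ t)) ((Q τ) ((Φ τ t) z))) : ℝ) :=
          integral_inner (hFxint t z) x
  have hPinner : ∀ t (x : EuclideanSpace ℝ (Fin n)), (inner ℝ x (P t x) : ℝ)
      = ∫ τ in Set.Ioi t, (inner ℝ ((Φ τ t) x) ((Q τ) ((Φ τ t) x)) : ℝ) := by
    intro t x
    rw [hPapp t x]
    calc (inner ℝ x (∫ τ in Set.Ioi t,
          (ContinuousLinearMap.adjoint (Φ τ t)) ((Q τ) ((Φ τ t) x))) : ℝ)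
        = ∫ τ in Set.Ioi t,
          (inner ℝ x ((ContinuousLinearMap.adjoint (Φ τ t)) ((Q τ) ((Φ τ t) x))) : ℝ) :=
          (integral_inner (hFxint t x) x).symm
      _ = ∫ τ in Set.Ioi t, (inner ℝ ((Φ τ t) x) ((Q τ) ((Φ τ t) x)) : ℝ) := by
          apply MeasureTheory.integral_congr_ae
          apply Filter.Eventually.of_forall
          intro τ
          exact hptwise t τ x x
  have hSint : ∀ t (x : EuclideanSpace ℝ (Fin n)), MeasureTheory.IntegrableOn
      (fun τ => (inner ℝ ((Φ τ t) x) ((Q τ) ((Φ τ t) x)) : ℝ)) (Set.Ioi t) := by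
    intro t x
    have h := (innerSL ℝ x).integrable_comp (hFxint t x)
    have heq : (fun τ => (innerSL ℝ x) ((ContinuousLinearMap.adjoint (Φ τ t))
        ((Q τ) ((Φ τ t) x)))) = fun τ => (inner ℝ ((Φ τ t) x) ((Q τ) ((Φ τ t) x)) : ℝ) := by
      funext τ
      exact hptwise t τ x x
    rwa [heq] at h
  have hΦlow : ∀ t τ (x : EuclideanSpace ℝ (Fin n)), 0 ≤ t → t ≤ τ →
      Real.exp (-(2*M)*(τ - t)) * ‖x‖^2 ≤ ‖(Φ τ t) x‖^2 := by
    intro t τ x ht htτ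
    set h : ℝ → ℝ :=
      fun u => Real.exp (2*M*u) * (inner ℝ ((Φ u t) x) ((Φ u t) x) : ℝ) with hh
    have hder : ∀ u : ℝ, HasDerivAt h
        (2*M*Real.exp (2*M*u) * (inner ℝ ((Φ u t) x) ((Φ u t) x) : ℝ)
          + Real.exp (2*M*u) * ((inner ℝ ((Φ u t) x) ((A u) ((Φ u t) x)) : ℝ)
            + (inner ℝ ((A u) ((Φ u t) x)) ((Φ u t) x) : ℝ))) u := by
      intro u
      have hv := hΦderiv t x u
      have hinner := HasDerivAt.inner ℝ hv hv
      have hexp : HasDerivAt (fun u : ℝ => Real.exp (2*M*u)) (2*M*Real.exp (2*M*u)) u := by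
        have h5 := ((hasDerivAt_id u).const_mul (2*M)).exp
        simpa [mul_comm] using h5
      have hmul := hexp.mul hinner
      convert hmul using 1
      rfl
      rfl
      rfl
    have hcont : Continuous h :=
      continuous_iff_continuousAt.2 fun u => (hder u).continuousAt
    have hmono : MonotoneOn h (Set.Ici t) := by
      apply monotoneOn_of_deriv_nonneg (convex_Ici t) hcont.continuousOn
      · intro u _
        exact (hder u).differentiableAt.differentiableWithinAt
      · intro u hu
        rw [interior_Ici] at hu
        have hu0 : 0 ≤ u := le_trans ht (le_of_lt hu)
        rw [(hder u).deriv]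
        have hb0 : ‖(A u) ((Φ u t) x)‖ ≤ M * ‖(Φ u t) x‖ :=
          le_trans ((A u).le_opNorm _)
            (mul_le_mul_of_nonneg_right (hAbdd u hu0) (norm_nonneg _))
        have hself : (inner ℝ ((Φ u t) x) ((Φ u t) x) : ℝ) = ‖(Φ u t) x‖^2 :=
          real_inner_self_eq_norm_sq _
        have hb1 : |(inner ℝ ((Φ u t) x) ((A u) ((Φ u t) x)) : ℝ)|
            ≤ M * (inner ℝ ((Φ u t) x) ((Φ u t) x) : ℝ) := by
          calc |(inner ℝ ((Φ u t) x) ((A u) ((Φ u t) x)) : ℝ)|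
              ≤ ‖(Φ u t) x‖ * ‖(A u) ((Φ u t) x)‖ := abs_real_inner_le_norm _ _
            _ ≤ ‖(Φ u t) x‖ * (M * ‖(Φ u t) x‖) :=
                mul_le_mul_of_nonneg_left hb0 (norm_nonneg _)
            _ = M * (inner ℝ ((Φ u t) x) ((Φ u t) x) : ℝ) := by rw [hself]; ring
        have hb2 : |(inner ℝ ((A u) ((Φ u t) x)) ((Φ u t) x) : ℝ)|
            ≤ M * (inner ℝ ((Φ u t) x) ((Φ u t) x) : ℝ) := by
          calc |(inner ℝ ((A u) ((Φ u t) x)) ((Φ u t) x) : ℝ)|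
              ≤ ‖(A u) ((Φ u t) x)‖ * ‖(Φ u t) x‖ := abs_real_inner_le_norm _ _
            _ ≤ (M * ‖(Φ u t) x‖) * ‖(Φ u t) x‖ :=
                mul_le_mul_of_nonneg_right hb0 (norm_nonneg _)
            _ = M * (inner ℝ ((Φ u t) x) ((Φ u t) x) : ℝ) := by rw [hself]; ring
        have he := Real.exp_pos (2*M*u)
        nlinarith [(abs_le.1 hb1).1, (abs_le.1 hb2).1, he]
    have hle := hmono (Set.self_mem_Ici) htτ htτ
    have hht : h t = Real.exp (2*M*t) * ‖x‖^2 := by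
      rw [hh]
      simp only [hΦid, ContinuousLinearMap.id_apply]
      congr 1
      exact real_inner_self_eq_norm_sq x
    have e2 : (inner ℝ ((Φ τ t) x) ((Φ τ t) x) : ℝ) = ‖(Φ τ t) x‖^2 :=
      real_inner_self_eq_norm_sq _
    have hle2 : Real.exp (2*M*t) * ‖x‖^2 ≤ Real.exp (2*M*τ) * ‖(Φ τ t) x‖^2 := by
      rw [← hht]
      calc h t ≤ h τ := hle
        _ = Real.exp (2*M*τ) * ‖(Φ τ t) x‖^2 := by rw [hh]; simp only [e2]
    have hE : Real.exp (-(2*M)*(τ - t)) * Real.exp (2*M*τ) = Real.exp (2*M*t) := by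
      rw [← Real.exp_add]; ring_nf
    nlinarith [hle2, Real.exp_pos (2*M*τ), hE, sq_nonneg ‖x‖]
  have hbounds : ∀ t, 0 ≤ t → ∀ x : EuclideanSpace ℝ (Fin n),
      (qm / (2 * M)) * ‖x‖ ^ 2 ≤ (inner ℝ x (P t x) : ℝ) ∧
      (inner ℝ x (P t x) : ℝ) ≤ (K ^ 2 * qp / (2 * α)) * ‖x‖ ^ 2 := by
    intro t ht x
    rw [hPinner t x]
    constructor
    · have hlowint := (integrableOn_exp_shift t (2*M) (by positivity)).const_mul (qm * ‖x‖^2)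
      have hle : ∀ τ ∈ Set.Ioi t, qm * ‖x‖^2 * Real.exp (-(2*M)*(τ - t))
          ≤ (inner ℝ ((Φ τ t) x) ((Q τ) ((Φ τ t) x)) : ℝ) := by
        intro τ hτ
        have h1 := (hQbounds τ ((Φ τ t) x)).1
        have h2 := hΦlow t τ x ht (le_of_lt hτ)
        calc qm * ‖x‖^2 * Real.exp (-(2*M)*(τ - t))
            = qm * (Real.exp (-(2*M)*(τ - t)) * ‖x‖^2) := by ring
          _ ≤ qm * ‖(Φ τ t) x‖^2 := mul_le_mul_of_nonneg_left h2 hqm.le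
          _ ≤ _ := h1
      have hmono := MeasureTheory.setIntegral_mono_on hlowint (hSint t x)
        measurableSet_Ioi hle
      have hval : (∫ τ in Set.Ioi t, qm * ‖x‖^2 * Real.exp (-(2*M)*(τ - t)))
          = qm * ‖x‖^2 * (1/(2*M)) := by
        rw [MeasureTheory.integral_const_mul, integral_exp_shift t (2*M) (by positivity)]
      rw [hval] at hmono
      calc qm / (2*M) * ‖x‖^2 = qm * ‖x‖^2 * (1/(2*M)) := by ring
        _ ≤ _ := hmono
    · have hupint := (integrableOn_exp_shift t (2*α) (by positivity)).const_mul
        (K^2 * qp * ‖x‖^2)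
      have hle : ∀ τ ∈ Set.Ioi t, (inner ℝ ((Φ τ t) x) ((Q τ) ((Φ τ t) x)) : ℝ)
          ≤ K^2 * qp * ‖x‖^2 * Real.exp (-(2*α)*(τ - t)) := by
        intro τ hτ
        have h1 := (hQbounds τ ((Φ τ t) x)).2
        have hn : ‖(Φ τ t) x‖ ≤ K * Real.exp (-α*(τ - t)) * ‖x‖ :=
          le_trans ((Φ τ t).le_opNorm x)
            (mul_le_mul_of_nonneg_right (hΦdecay t τ ht (le_of_lt hτ)) (norm_nonneg x))
        have hsq : ‖(Φ τ t) x‖^2 ≤ (K * Real.exp (-α*(τ - t)) * ‖x‖)^2 := by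
          have := pow_le_pow_left₀ (norm_nonneg _) hn 2
          exact this
        have hexp2 : Real.exp (-α*(τ - t)) * Real.exp (-α*(τ - t))
            = Real.exp (-(2*α)*(τ - t)) := by
          rw [← Real.exp_add]; ring_nf
        calc (inner ℝ ((Φ τ t) x) ((Q τ) ((Φ τ t) x)) : ℝ)
            ≤ qp * ‖(Φ τ t) x‖^2 := h1
          _ ≤ qp * (K * Real.exp (-α*(τ - t)) * ‖x‖)^2 :=
              mul_le_mul_of_nonneg_left hsq hqp.le
          _ = K^2 * qp * ‖x‖^2 * (Real.exp (-α*(τ - t)) * Real.exp (-α*(τ - t))) := by ring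
          _ = K^2 * qp * ‖x‖^2 * Real.exp (-(2*α)*(τ - t)) := by rw [hexp2]
      have hmono := MeasureTheory.setIntegral_mono_on (hSint t x) hupint
        measurableSet_Ioi hle
      have hval : (∫ τ in Set.Ioi t, K^2 * qp * ‖x‖^2 * Real.exp (-(2*α)*(τ - t)))
          = K^2 * qp * ‖x‖^2 * (1/(2*α)) := by
        rw [MeasureTheory.integral_const_mul, integral_exp_shift t (2*α) (by positivity)]
      rw [hval] at hmono
      calc (∫ τ in Set.Ioi t, (inner ℝ ((Φ τ t) x) ((Q τ) ((Φ τ t) x)) : ℝ))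
          ≤ K^2 * qp * ‖x‖^2 * (1/(2*α)) := hmono
        _ = K^2 * qp / (2*α) * ‖x‖^2 := by ring
  have hQeq : ∀ t : ℝ, (ContinuousLinearMap.adjoint (Φ 0 t)).comp
      ((G t).comp (Φ 0 t)) = Q t := by
    intro t
    rw [← hFeq t t, hΦid, ContinuousLinearMap.adjoint_id]
    simp
  refine ⟨fun t _ => hFint t, fun t _ x z => hsymm t x z, fun t ht x => hbounds t ht x, ?_⟩
  intro t ht
  rw [hPform]
  have h1 := hD2 0 t
  have h2 := hadjD h1
  have h3 := hRderiv t
  have hAll := h2.clm_comp (h3.clm_comp h1)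
  convert hAll using 1
  rw [← hQeq t]
  simp only [map_neg, ContinuousLinearMap.adjoint_comp, ContinuousLinearMap.neg_comp,
    ContinuousLinearMap.comp_neg, ContinuousLinearMap.add_comp, ContinuousLinearMap.comp_add,
    ContinuousLinearMap.comp_assoc, neg_add_rev, neg_neg]
  abel
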